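/- Block-diagonal separability of the loggle objective: suppose the minimizer {Ω̂(t_i)}_{i∈N} of L(𝛀) = (1/√|N|) Σ_{i∈N} [tr(Ω(t_i) Σ̂(t_i)) - log det Ω(t_i)] + λ Σ_{u≠v} sqrt(Σ_{i∈N} Ω_{uv}(t_i)^2) over positive definite matrices has block-diagonal form Ω̂(t_i) = diag(Ω̂_1(t_i), Ω̂_2(t_i)) for all i, with all Ω̂_1(t_i) of the same dimension p_1. Then {Ω̂_1(t_i)} minimizes the analogous objective built from the upper-left p_1×p_1 blocks of the Σ̂(t_i), and {Ω̂_2(t_i)} minimizes the analogous objective built from the lower-right blocks. -/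

import Mathlib

open scoped BigOperators
open Matrix

/-- The loggle objective function. -/
noncomputable def loggleObj {ι n : Type*} [Fintype ι] [Fintype n] [DecidableEq n]
    (S : ι → Matrix n n ℝ) (lam : ℝ) (Om : ι → Matrix n n ℝ) : ℝ :=
  (1 / Real.sqrt (Fintype.card ι)) *
      ∑ i, ((Om i * S i).trace - Real.log (Om i).det)
    + lam * ∑ u, ∑ v ∈ Finset.univ.filter (fun v => v ≠ u),
        Real.sqrt (∑ i, (Om i u v) ^ 2)

lemma posdef_fromBlocks {p₁ p₂ : ℕ} {A : Matrix (Fin p₁) (Fin p₁) ℝ}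
    {B : Matrix (Fin p₂) (Fin p₂) ℝ} (hA : A.PosDef) (hB : B.PosDef) :
    (Matrix.fromBlocks A 0 0 B).PosDef := by
  refine Matrix.PosDef.of_dotProduct_mulVec_pos ?_ ?_
  · rw [Matrix.IsHermitian, Matrix.fromBlocks_conjTranspose, hA.1.eq, hB.1.eq]
    simp
  · intro x hx
    have hxe : x = Sum.elim (x ∘ Sum.inl) (x ∘ Sum.inr) := by
      funext z; cases z <;> rfl
    rw [hxe, Matrix.fromBlocks_mulVec]
    simp only [Matrix.zero_mulVec, add_zero, zero_add, Sum.elim_comp_inl, Sum.elim_comp_inr]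
    have hsplit : star (Sum.elim (x ∘ Sum.inl) (x ∘ Sum.inr)) ⬝ᵥ
        Sum.elim (A *ᵥ (x ∘ Sum.inl)) (B *ᵥ (x ∘ Sum.inr))
        = star (x ∘ Sum.inl) ⬝ᵥ (A *ᵥ (x ∘ Sum.inl))
          + star (x ∘ Sum.inr) ⬝ᵥ (B *ᵥ (x ∘ Sum.inr)) := by
      simp [dotProduct, Fintype.sum_sum_type]
    rw [hsplit]
    rcases (by
      by_contra h
      push_neg at h
      apply hx
      funext z; cases z
      · exact congrFun h.1 _
      · exact congrFun h.2 _ : x ∘ Sum.inl ≠ 0 ∨ x ∘ Sum.inr ≠ 0) with h | h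
    · exact add_pos_of_pos_of_nonneg (hA.dotProduct_mulVec_pos h) (hB.posSemidef.dotProduct_mulVec_nonneg _)
    · exact add_pos_of_nonneg_of_pos (hA.posSemidef.dotProduct_mulVec_nonneg _) (hB.dotProduct_mulVec_pos h)

lemma loggle_split {ι : Type*} [Fintype ι] {p₁ p₂ : ℕ}
    (S₁ : ι → Matrix (Fin p₁) (Fin p₁) ℝ) (S₂ : ι → Matrix (Fin p₂) (Fin p₂) ℝ)
    (lam : ℝ)
    (A : ι → Matrix (Fin p₁) (Fin p₁) ℝ) (B : ι → Matrix (Fin p₂) (Fin p₂) ℝ)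
    (hA : ∀ i, (A i).det ≠ 0) (hB : ∀ i, (B i).det ≠ 0) :
    loggleObj (fun i => Matrix.fromBlocks (S₁ i) 0 0 (S₂ i)) lam
      (fun i => Matrix.fromBlocks (A i) 0 0 (B i))
      = loggleObj S₁ lam A + loggleObj S₂ lam B := by
  unfold loggleObj
  have htr : ∑ i, ((Matrix.fromBlocks (A i) 0 0 (B i) * Matrix.fromBlocks (S₁ i) 0 0 (S₂ i)).trace
      - Real.log (Matrix.fromBlocks (A i) 0 0 (B i)).det)
      = ∑ i, (((A i * S₁ i).trace - Real.log (A i).det)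
        + ((B i * S₂ i).trace - Real.log (B i).det)) := by
    refine Finset.sum_congr rfl fun i _ => ?_
    rw [Matrix.fromBlocks_multiply, Matrix.det_fromBlocks_zero₁₂,
      Real.log_mul (hA i) (hB i)]
    have h2 : (Matrix.fromBlocks (A i * S₁ i) (0:Matrix _ _ ℝ) 0 (B i * S₂ i)).trace
        = (A i * S₁ i).trace + (B i * S₂ i).trace := by
      simp [Matrix.trace, Matrix.diag, Fintype.sum_sum_type]
    simp only [Matrix.mul_zero, Matrix.zero_mul, add_zero, zero_add] at h2 ⊢
    rw [h2]
    ring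
  have hpen : ∑ u, ∑ v ∈ Finset.univ.filter (fun v => v ≠ u),
        Real.sqrt (∑ i, ((Matrix.fromBlocks (A i) 0 0 (B i)) u v) ^ 2)
      = (∑ u, ∑ v ∈ Finset.univ.filter (fun v => v ≠ u),
          Real.sqrt (∑ i, (A i u v) ^ 2))
        + ∑ u, ∑ v ∈ Finset.univ.filter (fun v => v ≠ u),
          Real.sqrt (∑ i, (B i u v) ^ 2) := by
    simp only [Finset.sum_filter, Fintype.sum_sum_type]
    simp [Matrix.fromBlocks_apply₁₁, Matrix.fromBlocks_apply₁₂,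
      Matrix.fromBlocks_apply₂₁, Matrix.fromBlocks_apply₂₂, Sum.inl.injEq, Sum.inr.injEq]
  rw [htr, hpen, Finset.sum_add_distrib]
  ring

/-- Block-diagonal separability of the loggle objective: if the minimizer is
block diagonal (conformally with block-diagonal `Σ̂`'s), then each block of the
minimizer minimizes the corresponding blockwise loggle objective. -/
theorem stmt_6 {ι : Type*} [Fintype ι] [Nonempty ι] {p₁ p₂ : ℕ}
    (lam : ℝ) (hlam : 0 < lam)
    (S₁ : ι → Matrix (Fin p₁) (Fin p₁) ℝ) (S₂ : ι → Matrix (Fin p₂) (Fin p₂) ℝ)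
    (hS₁ : ∀ i, (S₁ i).PosSemidef) (hS₂ : ∀ i, (S₂ i).PosSemidef)
    (S : ι → Matrix (Fin p₁ ⊕ Fin p₂) (Fin p₁ ⊕ Fin p₂) ℝ)
    (hS : ∀ i, S i = Matrix.fromBlocks (S₁ i) 0 0 (S₂ i))
    (O₁ : ι → Matrix (Fin p₁) (Fin p₁) ℝ) (O₂ : ι → Matrix (Fin p₂) (Fin p₂) ℝ)
    (hO₁pd : ∀ i, (O₁ i).PosDef) (hO₂pd : ∀ i, (O₂ i).PosDef)
    (hmin : ∀ Om : ι → Matrix (Fin p₁ ⊕ Fin p₂) (Fin p₁ ⊕ Fin p₂) ℝ,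
      (∀ i, (Om i).PosDef) →
      loggleObj S lam (fun i => Matrix.fromBlocks (O₁ i) 0 0 (O₂ i))
        ≤ loggleObj S lam Om) :
    (∀ Om₁ : ι → Matrix (Fin p₁) (Fin p₁) ℝ, (∀ i, (Om₁ i).PosDef) →
      loggleObj S₁ lam O₁ ≤ loggleObj S₁ lam Om₁) ∧
    (∀ Om₂ : ι → Matrix (Fin p₂) (Fin p₂) ℝ, (∀ i, (Om₂ i).PosDef) →
      loggleObj S₂ lam O₂ ≤ loggleObj S₂ lam Om₂) := by
  have hS' : S = fun i => Matrix.fromBlocks (S₁ i) 0 0 (S₂ i) := funext hS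
  subst hS'
  constructor
  · intro Om₁ hOm₁
    have h := hmin (fun i => Matrix.fromBlocks (Om₁ i) 0 0 (O₂ i))
      (fun i => posdef_fromBlocks (hOm₁ i) (hO₂pd i))
    rw [loggle_split S₁ S₂ lam O₁ O₂ (fun i => (hO₁pd i).det_pos.ne')
        (fun i => (hO₂pd i).det_pos.ne'),
      loggle_split S₁ S₂ lam Om₁ O₂ (fun i => (hOm₁ i).det_pos.ne')
        (fun i => (hO₂pd i).det_pos.ne')] at h
    linarith
  · intro Om₂ hOm₂
    have h := hmin (fun i => Matrix.fromBlocks (O₁ i) 0 0 (Om₂ i))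
      (fun i => posdef_fromBlocks (hO₁pd i) (hOm₂ i))
    rw [loggle_split S₁ S₂ lam O₁ O₂ (fun i => (hO₁pd i).det_pos.ne')
        (fun i => (hO₂pd i).det_pos.ne'),
      loggle_split S₁ S₂ lam O₁ Om₂ (fun i => (hO₁pd i).det_pos.ne')
        (fun i => (hOm₂ i).det_pos.ne')] at h
    linarith
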